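/- Let e, f ≥ 2 be integers, let k ≤ 0 be an integer, and set g = gcd(e, f). Then D_F(e, f, k) + 1 = g · (D_F(e/g, f/g, k) + 1). -/

import Mathlib

/-- `D_F(e,f,k)`: the rank of `SH^{2k}` of the Milnor fiber of the Fermat-type
singularity `x₁²+x₂²+x₃^e+x₄^f`, where `q` is the unique integer with
`0 ≤ q < e+f` and `min(e,f)·(1-k) ≡ q (mod e+f)`. -/
def DFermat (e f k : ℤ) : ℤ :=
  let q := (min e f * (1 - k)) % (e + f)
  if q = 0 then (Int.gcd e f : ℤ) - 1
  else if q ≤ min e f then q - 1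
  else if q ≤ max e f then min e f - 1
  else e + f - q - 1

lemma DFermat_def (e f k : ℤ) : DFermat e f k =
    if (min e f * (1 - k)) % (e + f) = 0 then (Int.gcd e f : ℤ) - 1
    else if (min e f * (1 - k)) % (e + f) ≤ min e f then (min e f * (1 - k)) % (e + f) - 1
    else if (min e f * (1 - k)) % (e + f) ≤ max e f then min e f - 1
    else e + f - (min e f * (1 - k)) % (e + f) - 1 := rfl

/-- Proposition 4.17 (iii): `D_F(e,f,k) + 1 = g·(D_F(e/g, f/g, k) + 1)` where
`g = gcd(e,f)`. -/
theorem DFermat_add_one_eq_gcd_mul_DFermat (e f k : ℤ) (he : 2 ≤ e) (hf : 2 ≤ f) (hk : k ≤ 0) :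
    DFermat e f k + 1 =
      (Int.gcd e f : ℤ) *
        (DFermat (e / (Int.gcd e f : ℤ)) (f / (Int.gcd e f : ℤ)) k + 1) := by
  set g : ℤ := (Int.gcd e f : ℤ) with hgdef
  have hgpos : 0 < g := by
    have : e ≠ 0 := by omega
    rw [hgdef]
    exact_mod_cast Int.gcd_pos_of_ne_zero_left f this
  set e' : ℤ := e / g with he'def
  set f' : ℤ := f / g with hf'def
  have hee : g * e' = e := Int.mul_ediv_cancel' (Int.gcd_dvd_left e f)
  have hff : g * f' = f := Int.mul_ediv_cancel' (Int.gcd_dvd_right e f)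
  have hcop : Int.gcd e' f' = 1 := by
    apply Int.gcd_div_gcd_div_gcd
    have : e ≠ 0 := by omega
    exact Int.gcd_pos_of_ne_zero_left f this
  have he'pos : 0 < e' := by nlinarith
  have hf'pos : 0 < f' := by nlinarith
  have hmin : min e f = g * min e' f' := by
    rcases le_total e' f' with h | h
    · rw [min_eq_left h, min_eq_left (show e ≤ f by nlinarith)]; exact hee.symm
    · rw [min_eq_right h, min_eq_right (show f ≤ e by nlinarith)]; exact hff.symm
  have hmax : max e f = g * max e' f' := by
    rcases le_total e' f' with h | h
    · rw [max_eq_right h, max_eq_right (show e ≤ f by nlinarith)]; exact hff.symm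
    · rw [max_eq_left h, max_eq_left (show f ≤ e by nlinarith)]; exact hee.symm
  have hsum : e + f = g * (e' + f') := by rw [← hee, ← hff]; ring
  have key : (min e f * (1 - k)) % (e + f) = g * ((min e' f' * (1 - k)) % (e' + f')) := by
    rw [hmin, hsum, mul_assoc, Int.mul_emod_mul_of_pos _ _ hgpos]
  rw [DFermat_def, DFermat_def, key, hmin, hmax]
  have hgne : g ≠ 0 := hgpos.ne'
  simp only [mul_eq_zero, hgne, false_or, mul_le_mul_iff_right₀ hgpos, hcop]
  split_ifs with h1 h2 h3
  · push_cast; ring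
  · ring
  · ring
  · rw [hsum]; ring
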